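/- Let G be a directed graph covered by pieces (subgraphs) P_1, …, P_m whose union is G, where each piece P has a boundary ∂P (the vertices it shares with other pieces). Suppose for each piece P there is a reachability certificate X_P with ∂P ⊆ V(X_P) such that for u, v ∈ ∂P, u reaches v in P iff u reaches v in X_P. Then for any u, v in the total boundary ∂R = ⋃ ∂P_i, u reaches v in G if and only if u reaches v in X = ⋃ X_P. -/

import Mathlib

/-- If a digraph `G` (edges `E` on `V`) is covered by pieces
`EP i`, with piece vertex sets `VP i`, boundaries `bP i` (vertices shared with
other pieces), and each piece has a reachability certificate `X i` (a digraph on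
`W ⊇ ι(V)` whose vertices from `ι(V)` are exactly the images of `bP i`, whose
extra vertices are private to the piece, and which preserves boundary-to-boundary
reachability of the piece exactly), then for boundary vertices `u, v ∈ ∂R`,
`u` reaches `v` in `G` iff `ι u` reaches `ι v` in the union `X` of certificates. -/
theorem stmt6 {V W I : Type*} (ι : V → W) (hι : Function.Injective ι)
    (E : V → V → Prop) (EP : I → V → V → Prop)
    (hcover : ∀ u v, E u v ↔ ∃ i, EP i u v)
    (VP : I → Set V) (hVP : ∀ i, VP i = {v | ∃ u, EP i v u ∨ EP i u v})
    (bP : I → Set V) (hbP : ∀ i, bP i = {v | v ∈ VP i ∧ ∃ j, j ≠ i ∧ v ∈ VP j})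
    (X : I → W → W → Prop)
    (VX : I → Set W) (hVX : ∀ i, VX i = {w | ∃ w', X i w w' ∨ X i w' w})
    (hcert : ∀ i, ∀ u ∈ bP i, ∀ v ∈ bP i,
      (Relation.ReflTransGen (EP i) u v ↔ Relation.ReflTransGen (X i) (ι u) (ι v)))
    (himg : ∀ i u, ι u ∈ VX i → u ∈ bP i)
    (hpriv : ∀ i j, i ≠ j → ∀ w, w ∈ VX i → w ∈ VX j → ∃ u, w = ι u) :
    ∀ u ∈ ⋃ i, bP i, ∀ v ∈ ⋃ i, bP i,
      (Relation.ReflTransGen E u v ↔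
        Relation.ReflTransGen (fun a c => ∃ i, X i a c) (ι u) (ι v)) := by
  have hEPle : ∀ i, ∀ u v, EP i u v → E u v := fun i u v h => (hcover u v).2 ⟨i, h⟩
  have hmemVP : ∀ i u v, EP i u v → u ∈ VP i ∧ v ∈ VP i := by
    intro i u v h; rw [hVP]; exact ⟨⟨v, Or.inl h⟩, ⟨u, Or.inr h⟩⟩
  have hbd : ∀ i u, u ∈ VP i → u ∈ ⋃ j, bP j → u ∈ bP i := by
    intro i u hu hub
    obtain ⟨j, hj⟩ := Set.mem_iUnion.1 hub
    rw [hbP] at hj ⊢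
    obtain ⟨hVPj, k, hk, hVPk⟩ := hj
    by_cases hji : j = i
    · subst hji; exact ⟨hu, k, hk, hVPk⟩
    · exact ⟨hu, j, hji, hVPj⟩
  -- Forward direction, with a carried partial segment inside piece `i`.
  have fwd : ∀ v u, Relation.ReflTransGen E u v → ∀ i a, a ∈ bP i →
      Relation.ReflTransGen (EP i) a u → v ∈ ⋃ j, bP j →
      Relation.ReflTransGen (fun a c => ∃ i, X i a c) (ι a) (ι v) := by
    intro v u h
    induction h using Relation.ReflTransGen.head_induction_on with
    | refl =>
      intro i a ha hseg hv
      have hvb : v ∈ bP i := by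
        rcases Relation.ReflTransGen.cases_tail hseg with heq | ⟨c, _, hc⟩
        · exact heq ▸ ha
        · exact hbd i v (hmemVP i c v hc).2 hv
      exact Relation.ReflTransGen.mono (fun x y h => ⟨i, h⟩) _ _ ((hcert i a ha v hvb).1 hseg)
    | head hstep hrest ih =>
      rename_i x y
      intro i a ha hseg hv
      obtain ⟨j, hj⟩ := (hcover _ _).1 hstep
      by_cases hji : j = i
      · exact ih i a ha (hseg.tail (hji ▸ hj)) hv
      · have hxVPj : x ∈ VP j := (hmemVP j _ _ hj).1
        have hxVPi : x ∈ VP i := by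
          rcases Relation.ReflTransGen.cases_tail hseg with heq | ⟨c, _, hc⟩
          · have := ha; rw [hbP] at this; exact heq ▸ this.1
          · exact (hmemVP i c x hc).2
        have hxbi : x ∈ bP i := by rw [hbP]; exact ⟨hxVPi, j, hji, hxVPj⟩
        have hxbj : x ∈ bP j := by
          rw [hbP]; exact ⟨hxVPj, i, fun h => hji h.symm, hxVPi⟩
        have h1 : Relation.ReflTransGen (fun a c => ∃ i, X i a c) (ι a) (ι x) :=
          Relation.ReflTransGen.mono (fun p q h => ⟨i, h⟩) _ _ ((hcert i a ha x hxbi).1 hseg)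
        exact h1.trans (ih j x hxbj (Relation.ReflTransGen.single hj) hv)
  -- Backward direction, with a carried partial segment inside certificate `i`.
  have bwd : ∀ y x, Relation.ReflTransGen (fun a c => ∃ i, X i a c) x y →
      ∀ i a, a ∈ bP i → Relation.ReflTransGen (X i) (ι a) x →
      ∀ v, v ∈ ⋃ j, bP j → y = ι v → Relation.ReflTransGen E a v := by
    intro y x h
    induction h using Relation.ReflTransGen.head_induction_on with
    | refl =>
      intro i a ha hseg v hv hy
      subst hy
      by_cases hav : a = v
      · exact hav ▸ Relation.ReflTransGen.refl
      · have hvVX : ι v ∈ VX i := by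
          rcases Relation.ReflTransGen.cases_tail hseg with heq | ⟨c, _, hc⟩
          · exact absurd (hι heq).symm hav
          · rw [hVX]; exact ⟨c, Or.inr hc⟩
        exact Relation.ReflTransGen.mono (hEPle i) _ _ ((hcert i a ha v (himg i v hvVX)).2 hseg)
    | head hstep hrest ih =>
      rename_i x' y'
      intro i a ha hseg v hv hy
      obtain ⟨j, hj⟩ := hstep
      by_cases hji : j = i
      · exact ih i a ha (hseg.tail (hji ▸ hj)) v hv hy
      · have hxVXj : x' ∈ VX j := by rw [hVX]; exact ⟨_, Or.inl hj⟩
        rcases Relation.ReflTransGen.cases_tail hseg with heq | ⟨c, _, hc⟩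
        · have hab : a ∈ bP j := himg j a (heq ▸ hxVXj)
          exact ih j a hab (Relation.ReflTransGen.single (heq ▸ hj)) v hv hy
        · have hxVXi : x' ∈ VX i := by rw [hVX]; exact ⟨c, Or.inr hc⟩
          obtain ⟨b, rfl⟩ := hpriv i j (fun h => hji h.symm) x' hxVXi hxVXj
          have hbi := himg i b hxVXi
          have hbj := himg j b hxVXj
          have h1 : Relation.ReflTransGen E a b :=
            Relation.ReflTransGen.mono (hEPle i) _ _ ((hcert i a ha b hbi).2 hseg)
          exact h1.trans (ih j b hbj (Relation.ReflTransGen.single hj) v hv hy)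
  intro u hu v hv
  obtain ⟨i, hi⟩ := Set.mem_iUnion.1 hu
  constructor
  · intro h
    exact fwd v u h i u hi Relation.ReflTransGen.refl hv
  · intro h
    exact bwd (ι v) (ι u) h i u hi Relation.ReflTransGen.refl v hv rfl
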